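/- Let Φ be a finite reduced crystallographic irreducible root system in a finite-dimensional real inner product space with a fixed base Δ, let T be a closed subset of Φ, and let (β₁, β₂, …, β_k) be a simple root path in Δ such that βᵢ ∈ [T ∪ −T] for all 1 ≤ i ≤ k−1 and β_k ∉ [T ∪ −T]. Then δ := β₁ + β₂ + ⋯ + β_k is a root, and there do not exist elements γ₁, γ₂, …, γ_p ∈ [T ∪ −T] (not necessarily distinct) with δ = γ₁ + γ₂ + ⋯ + γ_p. -/

import Mathlib

open scoped RealInnerProductSpace

/-- A finite reduced crystallographic root system in a finite-dimensional real
inner product space. -/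
structure IsRootSystem {V : Type*} [NormedAddCommGroup V] [InnerProductSpace ℝ V]
    [FiniteDimensional ℝ V] (Φ : Set V) : Prop where
  finite : Φ.Finite
  ne_zero : ∀ α ∈ Φ, α ≠ 0
  spans : Submodule.span ℝ Φ = ⊤
  reduced : ∀ α ∈ Φ, ∀ t : ℝ, t • α ∈ Φ → t = 1 ∨ t = -1
  reflection_mem : ∀ α ∈ Φ, ∀ β ∈ Φ, β - (2 * ⟪β, α⟫ / ⟪α, α⟫) • α ∈ Φ
  crystallographic : ∀ α ∈ Φ, ∀ β ∈ Φ, ∃ n : ℤ, 2 * ⟪β, α⟫ / ⟪α, α⟫ = (n : ℝ)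

/-- A subset `S` of a root system `Φ` is closed if for any `x, y ∈ S`,
`x + y ∈ Φ` implies `x + y ∈ S`. -/
def IsClosedSubset {V : Type*} [NormedAddCommGroup V] [InnerProductSpace ℝ V]
    (Φ S : Set V) : Prop :=
  S ⊆ Φ ∧ ∀ x ∈ S, ∀ y ∈ S, x + y ∈ Φ → x + y ∈ S

/-- The closure `[S]` of `S ⊆ Φ`: the smallest closed subset of `Φ` containing `S`,
i.e. the intersection of all closed subsets of `Φ` containing `S`. -/
def rootClosure {V : Type*} [NormedAddCommGroup V] [InnerProductSpace ℝ V]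
    (Φ S : Set V) : Set V :=
  ⋂₀ {U : Set V | IsClosedSubset Φ U ∧ S ⊆ U}

/-- A base (set of simple roots) of a root system `Φ`: a linearly independent
subset such that every root is an integer combination of elements of `Δ` with all
coefficients of the same sign. -/
def IsBase {V : Type*} [NormedAddCommGroup V] [InnerProductSpace ℝ V]
    (Φ Δ : Set V) : Prop :=
  Δ ⊆ Φ ∧ LinearIndependent ℝ ((↑) : Δ → V) ∧
    ∀ α ∈ Φ, ∃ c : V →₀ ℤ, (c.support : Set V) ⊆ Δ ∧
      α = c.sum (fun v n => (n : ℝ) • v) ∧ ((∀ v, 0 ≤ c v) ∨ (∀ v, c v ≤ 0))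

/-- A root system is irreducible if it cannot be partitioned into two nonempty
orthogonal subsets. -/
def IsIrreducibleRootSystem {V : Type*} [NormedAddCommGroup V] [InnerProductSpace ℝ V]
    (Φ : Set V) : Prop :=
  ¬ ∃ S T : Set V, S.Nonempty ∧ T.Nonempty ∧ Φ = S ∪ T ∧
      ∀ x ∈ S, ∀ y ∈ T, ⟪x, y⟫ = 0

/-- A simple root path: a finite sequence `β 0, β 1, …, β (k-1)` of pairwise
distinct simple roots in `Δ` such that consecutive roots are non-orthogonal. -/
def IsSimpleRootPath {V : Type*} [NormedAddCommGroup V] [InnerProductSpace ℝ V]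
    (Δ : Set V) (k : ℕ) (β : ℕ → V) : Prop :=
  1 ≤ k ∧ (∀ i < k, β i ∈ Δ) ∧ (∀ i < k, ∀ j < k, β i = β j → i = j) ∧
    ∀ i, i + 1 < k → ⟪β i, β (i + 1)⟫ ≠ 0

section Aux

variable {V : Type*} [NormedAddCommGroup V] [InnerProductSpace ℝ V] [FiniteDimensional ℝ V]
variable {Φ Δ T : Set V}

private lemma inner_self_pos' {x : V} (hx : x ≠ 0) : 0 < ⟪x, x⟫ :=
  lt_of_le_of_ne real_inner_self_nonneg (Ne.symm (inner_self_ne_zero.mpr hx))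

private lemma RS.neg_mem (hΦ : IsRootSystem Φ) {α : V} (hα : α ∈ Φ) : -α ∈ Φ := by
  have h := hΦ.reflection_mem α hα α hα
  have h0 : ⟪α, α⟫ ≠ 0 := inner_self_ne_zero.mpr (hΦ.ne_zero α hα)
  have h2 : 2 * ⟪α, α⟫ / ⟪α, α⟫ = (2 : ℝ) := by field_simp
  rw [h2] at h
  have : α - (2 : ℝ) • α = -α := by
    rw [two_smul]; abel
  rwa [this] at h

private lemma RS.add_mem (hΦ : IsRootSystem Φ) {α β : V} (hα : α ∈ Φ) (hβ : β ∈ Φ)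
    (hneg : ⟪α, β⟫ < 0) (hne : α + β ≠ 0) : α + β ∈ Φ := by
  obtain ⟨m, hm⟩ := hΦ.crystallographic α hα β hβ
  obtain ⟨n, hn⟩ := hΦ.crystallographic β hβ α hα
  have hαα : 0 < ⟪α, α⟫ := inner_self_pos' (hΦ.ne_zero α hα)
  have hββ : 0 < ⟪β, β⟫ := inner_self_pos' (hΦ.ne_zero β hβ)
  have hβα : ⟪β, α⟫ < 0 := by rwa [real_inner_comm]
  have hmneg : (m : ℝ) < 0 := by
    rw [← hm]
    exact div_neg_of_neg_of_pos (by linarith) hαα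
  have hnneg : (n : ℝ) < 0 := by
    rw [← hn]
    exact div_neg_of_neg_of_pos (by linarith) hββ
  by_cases hm1 : m = -1
  · have h := hΦ.reflection_mem α hα β hβ
    rw [hm, hm1] at h
    have : β - ((-1 : ℤ) : ℝ) • α = α + β := by push_cast; rw [neg_smul, one_smul]; abel
    rwa [this] at h
  by_cases hn1 : n = -1
  · have h := hΦ.reflection_mem β hβ α hα
    rw [hn, hn1] at h
    have : α - ((-1 : ℤ) : ℝ) • β = α + β := by push_cast; rw [neg_smul, one_smul]; abel
    rwa [this] at h
  -- otherwise m ≤ -2 and n ≤ -2, which forces ‖α+β‖² ≤ 0, a contradiction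
  exfalso
  have hm2 : (m : ℝ) ≤ -2 := by
    have : m ≤ -2 := by
      have : m < 0 := by exact_mod_cast hmneg
      omega
    exact_mod_cast this
  have hn2 : (n : ℝ) ≤ -2 := by
    have : n ≤ -2 := by
      have : n < 0 := by exact_mod_cast hnneg
      omega
    exact_mod_cast this
  have h1 : ⟪β, α⟫ ≤ -⟪α, α⟫ := by
    have := hm ▸ hm2
    rw [div_le_iff₀ hαα] at this
    linarith
  have h2 : ⟪α, β⟫ ≤ -⟪β, β⟫ := by
    have := hn ▸ hn2
    rw [div_le_iff₀ hββ] at this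
    linarith
  have h3 : 0 < ⟪α + β, α + β⟫ := inner_self_pos' hne
  rw [real_inner_add_add_self] at h3
  rw [real_inner_comm] at h1
  linarith

private lemma li_unique (hΔli : LinearIndependent ℝ ((↑) : Δ → V)) {l : V →₀ ℝ}
    (hs : ↑l.support ⊆ Δ) (h : Finsupp.linearCombination ℝ id l = 0) : l = 0 :=
  linearIndepOn_iff.mp (linearIndependent_subtype_iff.mp hΔli) l ((Finsupp.mem_supported ℝ l).mpr hs) h

private lemma lc_int (c : V →₀ ℤ) :
    Finsupp.linearCombination ℝ id (c.mapRange (fun n : ℤ => (n : ℝ)) (by simp)) =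
      c.sum (fun v n => (n : ℝ) • v) := by
  rw [Finsupp.linearCombination_apply]
  rw [Finsupp.sum_mapRange_index (by simp)]
  rfl

/-- Distinct simple roots have non-positive inner product. -/
private lemma simple_inner_nonpos (hΦ : IsRootSystem Φ) (hΔ : IsBase Φ Δ) {α β : V}
    (hα : α ∈ Δ) (hβ : β ∈ Δ) (hne : α ≠ β) : ⟪α, β⟫ ≤ 0 := by
  by_contra h
  push_neg at h
  have hαΦ : α ∈ Φ := hΔ.1 hα
  have hβΦ : β ∈ Φ := hΔ.1 hβ
  have hsub : α + -β ∈ Φ := by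
    refine RS.add_mem hΦ hαΦ (RS.neg_mem hΦ hβΦ) ?_ ?_
    · rw [inner_neg_right]; linarith
    · intro h0
      exact hne (by linear_combination (norm := abel) h0)
  obtain ⟨c, hsupp, hrep, hsign⟩ := hΔ.2.2 _ hsub
  classical
  set c' : V →₀ ℝ := c.mapRange (fun n : ℤ => (n : ℝ)) (by simp) with hc'
  set l : V →₀ ℝ := c' + Finsupp.single β 1 - Finsupp.single α 1 with hl
  have hls : ↑l.support ⊆ Δ := by
    intro v hv
    have hv' : v ∈ (c' + Finsupp.single β 1).support ∪ (Finsupp.single α (1:ℝ)).support :=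
      Finsupp.support_sub hv
    rcases Finset.mem_union.mp hv' with hv' | hv'
    · rcases Finset.mem_union.mp (Finsupp.support_add hv') with hv'' | hv''
      · exact hsupp (Finsupp.support_mapRange hv'')
      · have := Finsupp.support_single_subset hv''
        simp only [Finset.mem_singleton] at this
        exact this ▸ hβ
    · have := Finsupp.support_single_subset hv'
      simp only [Finset.mem_singleton] at this
      exact this ▸ hα
  have hlc : Finsupp.linearCombination ℝ id l = 0 := by
    rw [hl, map_sub, map_add, lc_int, ← hrep]
    simp only [Finsupp.linearCombination_single, id_eq, one_smul]
    abel
  have hl0 : l = 0 := li_unique hΔ.2.1 hls hlc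
  have hca : (c α : ℝ) = 1 := by
    have := DFunLike.congr_fun hl0 α
    simp only [hl, hc', Finsupp.coe_sub, Finsupp.coe_add, Pi.sub_apply, Pi.add_apply,
      Finsupp.mapRange_apply, Finsupp.single_eq_of_ne' hne.symm, Finsupp.single_eq_same,
      Finsupp.coe_zero, Pi.zero_apply] at this
    linarith
  have hcb : (c β : ℝ) = -1 := by
    have := DFunLike.congr_fun hl0 β
    simp only [hl, hc', Finsupp.coe_sub, Finsupp.coe_add, Pi.sub_apply, Pi.add_apply,
      Finsupp.mapRange_apply, Finsupp.single_eq_of_ne' hne, Finsupp.single_eq_same,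
      Finsupp.coe_zero, Pi.zero_apply] at this
    linarith
  rcases hsign with hsign | hsign
  · have := hsign β
    rw [show c β = -1 from by exact_mod_cast hcb] at this
    omega
  · have := hsign α
    rw [show c α = 1 from by exact_mod_cast hca] at this
    omega

/-- A sum of distinct simple roots is nonzero. -/
private lemma sum_distinct_simple_ne_zero (hΔ : IsBase Φ Δ) {k : ℕ} {β : ℕ → V} (hk : 1 ≤ k)
    (hmem : ∀ i < k, β i ∈ Δ) (hinj : ∀ i < k, ∀ j < k, β i = β j → i = j) :
    (∑ i ∈ Finset.range k, β i) ≠ 0 := by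
  classical
  intro h0
  set l : V →₀ ℝ := ∑ i ∈ Finset.range k, Finsupp.single (β i) 1 with hl
  have hls : ↑l.support ⊆ Δ := by
    intro v hv
    obtain ⟨i, hi, hvi⟩ := Finsupp.mem_support_finset_sum v hv
    have := Finsupp.support_single_subset hvi
    simp only [Finset.mem_singleton] at this
    exact this ▸ hmem i (Finset.mem_range.mp hi)
  have hlc : Finsupp.linearCombination ℝ id l = 0 := by
    rw [hl, map_sum]
    simp only [Finsupp.linearCombination_single, id_eq, one_smul]
    exact h0
  have hl0 : l = 0 := li_unique hΔ.2.1 hls hlc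
  have h1 : l (β 0) = ∑ i ∈ Finset.range k, Finsupp.single (β i) (1:ℝ) (β 0) := by
    rw [hl]; exact Finsupp.finset_sum_apply _ _ _
  have h2 : (1 : ℝ) ≤ l (β 0) := by
    rw [h1]
    have : Finsupp.single (β 0) (1:ℝ) (β 0) = 1 := Finsupp.single_eq_same
    calc (1:ℝ) = Finsupp.single (β 0) (1:ℝ) (β 0) := this.symm
      _ ≤ ∑ i ∈ Finset.range k, Finsupp.single (β i) (1:ℝ) (β 0) := by
          refine Finset.single_le_sum (f := fun i => Finsupp.single (β i) (1:ℝ) (β 0)) ?_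
            (Finset.mem_range.mpr hk)
          intro i _
          simp only [Finsupp.single_apply]
          split <;> norm_num
  rw [hl0] at h2
  norm_num at h2

/-- The sum of a simple root path is a root. -/
private lemma path_sum_mem (hΦ : IsRootSystem Φ) (hΔ : IsBase Φ Δ) :
    ∀ (k : ℕ) (β : ℕ → V), IsSimpleRootPath Δ k β → (∑ i ∈ Finset.range k, β i) ∈ Φ := by
  intro k
  induction k with
  | zero => intro β h; exact absurd h.1 (by omega)
  | succ k ih =>
    intro β h
    obtain ⟨-, hmem, hinj, hadj⟩ := h
    rcases Nat.eq_zero_or_pos k with rfl | hk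
    · rw [Finset.sum_range_one]
      exact hΔ.1 (hmem 0 (by omega))
    · obtain ⟨k', rfl⟩ : ∃ k', k = k' + 1 := ⟨k - 1, by omega⟩
      have hsub : IsSimpleRootPath Δ (k' + 1) β :=
        ⟨by omega, fun i hi => hmem i (by omega),
          fun i hi j hj he => hinj i (by omega) j (by omega) he,
          fun i hi => hadj i (by omega)⟩
      have hδ' := ih β hsub
      have hinner : ⟪∑ i ∈ Finset.range (k' + 1), β i, β (k' + 1)⟫ < 0 := by
        rw [sum_inner]
        have hterm : ∀ i ∈ Finset.range (k' + 1), ⟪β i, β (k' + 1)⟫ ≤ 0 := by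
          intro i hi
          have hi' := Finset.mem_range.mp hi
          refine simple_inner_nonpos hΦ hΔ (hmem i (by omega)) (hmem (k' + 1) (by omega)) ?_
          intro he
          have := hinj i (by omega) (k' + 1) (by omega) he
          omega
        have hlast : ⟪β k', β (k' + 1)⟫ < 0 := by
          have hne := hadj k' (by omega)
          have hle := hterm k' (Finset.mem_range.mpr (by omega))
          exact lt_of_le_of_ne hle hne
        rw [Finset.sum_range_succ]
        have : ∑ i ∈ Finset.range k', ⟪β i, β (k' + 1)⟫ ≤ 0 :=
          Finset.sum_nonpos (fun i hi => hterm i (Finset.mem_range.mpr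
            (by have := Finset.mem_range.mp hi; omega)))
        linarith
      have hne0 : (∑ i ∈ Finset.range (k' + 1), β i) + β (k' + 1) ≠ 0 := by
        rw [← Finset.sum_range_succ]
        exact sum_distinct_simple_ne_zero hΔ (by omega) hmem hinj
      have := RS.add_mem hΦ hδ' (hΔ.1 (hmem (k' + 1) (by omega))) hinner hne0
      rwa [← Finset.sum_range_succ] at this

-- Closure lemmas
private lemma phi_closed : IsClosedSubset Φ Φ := ⟨subset_rfl, fun _ _ _ _ h => h⟩

private lemma TT_subset (hΦ : IsRootSystem Φ) (hTΦ : T ⊆ Φ) : T ∪ -T ⊆ Φ := by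
  intro v hv
  rcases hv with hv | hv
  · exact hTΦ hv
  · have : -v ∈ Φ := hTΦ (Set.mem_neg.mp hv)
    simpa using RS.neg_mem hΦ this

private lemma closure_subset_phi (hΦ : IsRootSystem Φ) (hTΦ : T ⊆ Φ) :
    rootClosure Φ (T ∪ -T) ⊆ Φ :=
  Set.sInter_subset_of_mem ⟨phi_closed, TT_subset hΦ hTΦ⟩

private lemma closure_closed (hΦ : IsRootSystem Φ) (hTΦ : T ⊆ Φ) :
    IsClosedSubset Φ (rootClosure Φ (T ∪ -T)) := by
  refine ⟨closure_subset_phi hΦ hTΦ, ?_⟩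
  intro x hx y hy hxy
  intro U hU
  exact hU.1.2 x (hx U hU) y (hy U hU) hxy

private lemma neg_mem_closure (hΦ : IsRootSystem Φ) {x : V}
    (hx : x ∈ rootClosure Φ (T ∪ -T)) : -x ∈ rootClosure Φ (T ∪ -T) := by
  intro U hU
  obtain ⟨hUc, hUs⟩ := hU
  have hU' : IsClosedSubset Φ {v | -v ∈ U} ∧ T ∪ -T ⊆ {v | -v ∈ U} := by
    constructor
    · constructor
      · intro v hv
        have : -v ∈ Φ := hUc.1 hv
        simpa using RS.neg_mem hΦ this
      · intro a ha b hb hab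
        have : -a + -b ∈ Φ := by
          have := RS.neg_mem hΦ hab
          rwa [neg_add] at this
        have := hUc.2 (-a) ha (-b) hb this
        show -(a + b) ∈ U
        rwa [neg_add]
    · intro v hv
      show -v ∈ U
      apply hUs
      rcases hv with hv | hv
      · exact Or.inr (Set.mem_neg.mpr (by simpa using hv))
      · exact Or.inl (Set.mem_neg.mp hv)
  exact hx {v | -v ∈ U} hU'

private lemma inner_multiset_sum (δ : V) (M : Multiset V) :
    ⟪δ, M.sum⟫ = (M.map fun x => ⟪δ, x⟫).sum := by
  induction M using Multiset.induction with
  | empty => simp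
  | cons a s ih => simp [inner_add_right, ih]

private lemma multiset_sum_nonpos (M : Multiset ℝ) (h : ∀ x ∈ M, x ≤ 0) : M.sum ≤ 0 := by
  induction M using Multiset.induction with
  | empty => simp
  | cons a s ih =>
    rw [Multiset.sum_cons]
    have ha := h a (Multiset.mem_cons_self a s)
    have hs := ih (fun x hx => h x (Multiset.mem_cons_of_mem hx))
    linarith

/-- A nonempty sum of elements of the closure which is a root lies in the closure. -/
private lemma msum_mem_closure (hΦ : IsRootSystem Φ) (hTΦ : T ⊆ Φ) :
    ∀ M : Multiset V, M ≠ 0 → (∀ x ∈ M, x ∈ rootClosure Φ (T ∪ -T)) → M.sum ∈ Φ →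
      M.sum ∈ rootClosure Φ (T ∪ -T) := by
  intro M
  induction M using Multiset.strongInductionOn with
  | _ M IH =>
    intro hM0 hmem hsum
    have hδ0 : M.sum ≠ 0 := hΦ.ne_zero _ hsum
    have hpos : 0 < ⟪M.sum, M.sum⟫ := inner_self_pos' hδ0
    have hex : ∃ x ∈ M, 0 < ⟪M.sum, x⟫ := by
      by_contra h
      push_neg at h
      have : ⟪M.sum, M.sum⟫ ≤ 0 := by
        rw [inner_multiset_sum]
        refine multiset_sum_nonpos _ ?_
        intro y hy
        obtain ⟨x, hx, rfl⟩ := Multiset.mem_map.mp hy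
        exact h x hx
      linarith
    obtain ⟨x, hxM, hx⟩ := hex
    obtain ⟨M', rfl⟩ := Multiset.exists_cons_of_mem hxM
    by_cases hM' : M' = 0
    · subst hM'
      simpa using hmem x (Multiset.mem_cons_self x 0)
    by_cases hsx : (x ::ₘ M').sum = x
    · rw [hsx]
      exact hmem x (Multiset.mem_cons_self x M')
    · have hxΦ : x ∈ Φ := closure_subset_phi hΦ hTΦ (hmem x (Multiset.mem_cons_self x M'))
      have h1 : (x ::ₘ M').sum + -x ∈ Φ := by
        refine RS.add_mem hΦ hsum (RS.neg_mem hΦ hxΦ) ?_ ?_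
        · rw [inner_neg_right]; linarith
        · intro h0
          exact hsx (by linear_combination (norm := abel) h0)
      have h2 : (x ::ₘ M').sum + -x = M'.sum := by
        rw [Multiset.sum_cons]; abel
      rw [h2] at h1
      have h3 : M'.sum ∈ rootClosure Φ (T ∪ -T) :=
        IH M' (Multiset.lt_cons_self M' x) hM'
          (fun y hy => hmem y (Multiset.mem_cons_of_mem hy)) h1
      have h4 : M'.sum + x ∈ Φ := by
        rw [show M'.sum + x = (x ::ₘ M').sum from by rw [Multiset.sum_cons]; abel]
        exact hsum
      have := (closure_closed hΦ hTΦ).2 _ h3 _ (hmem x (Multiset.mem_cons_self x M')) h4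
      rwa [show M'.sum + x = (x ::ₘ M').sum from by rw [Multiset.sum_cons]; abel] at this

/-- The sum of the path does not lie in the closure. -/
private lemma path_sum_not_mem (hΦ : IsRootSystem Φ) (hΔ : IsBase Φ Δ) (hTΦ : T ⊆ Φ) :
    ∀ (k : ℕ) (β : ℕ → V), IsSimpleRootPath Δ k β →
      (∀ i, i + 1 < k → β i ∈ rootClosure Φ (T ∪ -T)) →
      β (k - 1) ∉ rootClosure Φ (T ∪ -T) →
      (∑ i ∈ Finset.range k, β i) ∉ rootClosure Φ (T ∪ -T) := by
  intro k
  induction k with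
  | zero => intro β h; exact absurd h.1 (by omega)
  | succ k ih =>
    intro β hpath hmem hlast hC
    rcases Nat.eq_zero_or_pos k with rfl | hk
    · rw [Finset.sum_range_one] at hC
      exact hlast (by simpa using hC)
    · set β' : ℕ → V := fun i => β (i + 1) with hβ'
      have hpath' : IsSimpleRootPath Δ k β' :=
        ⟨hk, fun i hi => hpath.2.1 (i + 1) (by omega),
          fun i hi j hj he => by
            have := hpath.2.2.1 (i + 1) (by omega) (j + 1) (by omega) he
            omega,
          fun i hi => hpath.2.2.2 (i + 1) (by omega)⟩
      have hmem' : ∀ i, i + 1 < k → β' i ∈ rootClosure Φ (T ∪ -T) :=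
        fun i hi => hmem (i + 1) (by omega)
      have hlast' : β' (k - 1) ∉ rootClosure Φ (T ∪ -T) := by
        have he : k - 1 + 1 = k + 1 - 1 := by omega
        simpa [hβ', he] using hlast
      have hsum' : (∑ i ∈ Finset.range k, β' i) ∈ Φ := path_sum_mem hΦ hΔ k β' hpath'
      have hβ0 : β 0 ∈ rootClosure Φ (T ∪ -T) := hmem 0 (by omega)
      have hnβ0 : -β 0 ∈ rootClosure Φ (T ∪ -T) := neg_mem_closure hΦ hβ0
      have heq : (∑ i ∈ Finset.range (k + 1), β i) + -β 0 = ∑ i ∈ Finset.range k, β' i := by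
        rw [Finset.sum_range_succ']
        abel
      have : (∑ i ∈ Finset.range (k + 1), β i) + -β 0 ∈ rootClosure Φ (T ∪ -T) :=
        (closure_closed hΦ hTΦ).2 _ hC _ hnβ0 (heq ▸ hsum')
      rw [heq] at this
      exact ih β' hpath' hmem' hlast' this

end Aux

/-- If a simple root path lies in `[T ∪ -T]` except at its last vertex, then its sum
`δ` is a root which is not a sum of (not necessarily distinct) elements of `[T ∪ -T]`. -/
theorem simpleRootPath_sum_not_sum_of_closure {V : Type*} [NormedAddCommGroup V]
    [InnerProductSpace ℝ V] [FiniteDimensional ℝ V] (Φ Δ T : Set V)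
    (hΦ : IsRootSystem Φ) (hirr : IsIrreducibleRootSystem Φ) (hΔ : IsBase Φ Δ)
    (hT : IsClosedSubset Φ T) (k : ℕ) (β : ℕ → V)
    (hpath : IsSimpleRootPath Δ k β)
    (hmem : ∀ i, i + 1 < k → β i ∈ rootClosure Φ (T ∪ -T))
    (hlast : β (k - 1) ∉ rootClosure Φ (T ∪ -T)) :
    (∑ i ∈ Finset.range k, β i) ∈ Φ ∧
      ¬ ∃ (p : ℕ) (γ : ℕ → V), 1 ≤ p ∧ (∀ i < p, γ i ∈ rootClosure Φ (T ∪ -T)) ∧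
        ∑ i ∈ Finset.range k, β i = ∑ i ∈ Finset.range p, γ i := by
  have hδΦ : (∑ i ∈ Finset.range k, β i) ∈ Φ := path_sum_mem hΦ hΔ k β hpath
  refine ⟨hδΦ, ?_⟩
  rintro ⟨p, γ, hp, hγ, heq⟩
  have hTΦ : T ⊆ Φ := hT.1
  apply path_sum_not_mem hΦ hΔ hTΦ k β hpath hmem hlast
  rw [heq]
  have hms : (∑ i ∈ Finset.range p, γ i) = ((Finset.range p).val.map γ).sum := rfl
  rw [hms]
  refine msum_mem_closure hΦ hTΦ _ ?_ ?_ ?_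
  · intro h0
    have := congrArg Multiset.card h0
    simp at this
    omega
  · intro x hx
    obtain ⟨i, hi, rfl⟩ := Multiset.mem_map.mp hx
    exact hγ i (by simpa using hi)
  · rw [← hms, ← heq]
    exact hδΦ
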